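/- Let X_i, Y_i, Z_i (1 ≤ i ≤ n) be 3n mutually independent random variables, where X_i, Y_i, Z_i are each distributed according to F_i, and all 3n values are almost surely distinct. Let W* > W** be the largest and second largest of all 3n values. Then Pr[W* ∈ {X_1,…,X_n} and W** ∈ {Y_1,…,Y_n}] ≥ 1/9. -/

import Mathlib

open Finset MeasureTheory ProbabilityTheory


/-- The event (as a set of functions) that `p₁` is the strict argmax and `p₂` the
strict second argmax. -/
def Fset {n : ℕ} (p₁ p₂ : Fin 3 × Fin n) : Set ((Fin 3 × Fin n) → ℝ) :=
  {f | (∀ q, q ≠ p₁ → f q < f p₁) ∧ ∀ q, q ≠ p₁ → q ≠ p₂ → f q < f p₂}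

lemma measurableSet_imp' {α : Type*} [MeasurableSpace α] (P : Prop) {s : Set α}
    (hs : MeasurableSet s) : MeasurableSet {x | P → x ∈ s} := by
  by_cases hP : P
  · simpa [hP] using hs
  · simp [hP]

lemma measurableSet_Fset {n : ℕ} (p₁ p₂ : Fin 3 × Fin n) : MeasurableSet (Fset p₁ p₂) := by
  have h1 : ∀ p q : Fin 3 × Fin n, MeasurableSet {f : (Fin 3 × Fin n) → ℝ | f q < f p} :=
    fun p q => measurableSet_lt (measurable_pi_apply q) (measurable_pi_apply p)
  have : Fset p₁ p₂ = (⋂ q, {f : (Fin 3 × Fin n) → ℝ | q ≠ p₁ → f q < f p₁}) ∩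
      ⋂ q, {f : (Fin 3 × Fin n) → ℝ | q ≠ p₁ → q ≠ p₂ → f q < f p₂} := by
    ext f
    simp [Fset, Set.mem_iInter, forall_and]
  rw [this]
  exact ((MeasurableSet.iInter fun q => measurableSet_imp' _ (h1 p₁ q)).inter
    (MeasurableSet.iInter fun q => measurableSet_imp' _ (measurableSet_imp' _ (h1 p₂ q))))

lemma Fset_disjoint {n : ℕ} {p₁ p₂ p₁' p₂' : Fin 3 × Fin n} (h : p₁ ≠ p₂) (h' : p₁' ≠ p₂')
    (hne : (p₁, p₂) ≠ (p₁', p₂')) : Disjoint (Fset p₁ p₂) (Fset p₁' p₂') := by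
  rw [Set.disjoint_left]
  rintro f ⟨h1, h2⟩ ⟨h1', h2'⟩
  have e1 : p₁ = p₁' := by
    by_contra hne1
    exact lt_asymm (h1' p₁ hne1) (h1 p₁' (Ne.symm hne1))
  subst e1
  have e2 : p₂ ≠ p₂' := by
    intro h
    exact hne (by rw [h])
  exact lt_asymm (h2' p₂ (Ne.symm h) e2) (h2 p₂' (Ne.symm h') (Ne.symm e2))

lemma measurableSet_inj {n : ℕ} :
    MeasurableSet {f : (Fin 3 × Fin n) → ℝ | Function.Injective f} := by
  have : {f : (Fin 3 × Fin n) → ℝ | Function.Injective f} =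
      ⋂ q, ⋂ q', {f : (Fin 3 × Fin n) → ℝ | f q = f q' → q = q'} := by
    ext f
    simp [Function.Injective, Set.mem_iInter]
  rw [this]
  refine MeasurableSet.iInter fun q => MeasurableSet.iInter fun q' => ?_
  by_cases hqq : q = q'
  · simp [hqq]
  · have : {f : (Fin 3 × Fin n) → ℝ | f q = f q' → q = q'} =
        {f : (Fin 3 × Fin n) → ℝ | f q = f q'}ᶜ := by
      ext f; simp [hqq]
    rw [this]
    exact (measurableSet_eq_fun (measurable_pi_apply q) (measurable_pi_apply q')).compl

lemma Fset_cover {n : ℕ} (hn : 0 < n) {f : (Fin 3 × Fin n) → ℝ}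
    (hf : Function.Injective f) : ∃ p₁ p₂, p₁ ≠ p₂ ∧ f ∈ Fset p₁ p₂ := by
  haveI : NeZero n := ⟨hn.ne'⟩
  obtain ⟨p₁, -, h₁⟩ := Finset.exists_max_image Finset.univ f ⟨(0, 0), Finset.mem_univ _⟩
  obtain ⟨q0, hq0⟩ := exists_ne p₁
  obtain ⟨p₂, hp₂mem, h₂⟩ := Finset.exists_max_image (Finset.univ.erase p₁) f
    ⟨q0, Finset.mem_erase.2 ⟨hq0, Finset.mem_univ _⟩⟩
  have hp₂ : p₂ ≠ p₁ := (Finset.mem_erase.1 hp₂mem).1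
  refine ⟨p₁, p₂, Ne.symm hp₂, fun q hq => ?_, fun q hq1 hq2 => ?_⟩
  · exact lt_of_le_of_ne (h₁ q (Finset.mem_univ _)) (hf.ne hq)
  · exact lt_of_le_of_ne (h₂ q (Finset.mem_erase.2 ⟨hq1, Finset.mem_univ _⟩)) (hf.ne hq2)

/-- Reindexing equivalence permuting the group label independently for each index. -/
def permEquiv {n : ℕ} (σ : Fin n → Equiv.Perm (Fin 3)) :
    (Fin 3 × Fin n) ≃ (Fin 3 × Fin n) where
  toFun q := (σ q.2 q.1, q.2)
  invFun q := ((σ q.2)⁻¹ q.1, q.2)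
  left_inv q := by simp
  right_inv q := by simp

@[simp] lemma permEquiv_apply {n : ℕ} (σ : Fin n → Equiv.Perm (Fin 3)) (q : Fin 3 × Fin n) :
    permEquiv σ q = (σ q.2 q.1, q.2) := rfl

@[simp] lemma permEquiv_symm_apply {n : ℕ} (σ : Fin n → Equiv.Perm (Fin 3)) (q : Fin 3 × Fin n) :
    (permEquiv σ).symm q = ((σ q.2)⁻¹ q.1, q.2) := rfl

lemma exists_perm_fin3 : ∀ a b : Fin 3, a ≠ b →
    ∃ π : Equiv.Perm (Fin 3), π a = 0 ∧ π b = 1 := by decide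

/-- The probability that the largest of the `3n` values lies among the `X`'s
and the second largest among the `Y`'s is at least `1/9`. -/
theorem stmt_12 {Ω : Type*} [MeasurableSpace Ω] (μ : Measure Ω)
    [IsProbabilityMeasure μ]
    (n : ℕ) (hn : 0 < n) (X Y Z : Fin n → Ω → ℝ)
    (hmX : ∀ i, Measurable (X i)) (hmY : ∀ i, Measurable (Y i))
    (hmZ : ∀ i, Measurable (Z i))
    (hindep : iIndepFun
      (fun q : Fin 3 × Fin n => ![X, Y, Z] q.1 q.2) μ)
    (hidY : ∀ i, IdentDistrib (X i) (Y i) μ μ)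
    (hidZ : ∀ i, IdentDistrib (X i) (Z i) μ μ)
    (hdistinct : ∀ᵐ ω ∂μ,
      Function.Injective (fun q : Fin 3 × Fin n => ![X, Y, Z] q.1 q.2 ω)) :
    (1 / 9 : ENNReal) ≤
      μ {ω | ∃ i j : Fin n,
        (∀ q : Fin 3 × Fin n, q ≠ (0, i) → ![X, Y, Z] q.1 q.2 ω < X i ω) ∧
        (∀ q : Fin 3 × Fin n, q ≠ (0, i) → q ≠ (1, j) →
          ![X, Y, Z] q.1 q.2 ω < Y j ω)} := by
  classical
  set R : Fin 3 × Fin n → Ω → ℝ := fun q => ![X, Y, Z] q.1 q.2 with hRdef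
  have hmR : ∀ q, Measurable (R q) := by
    rintro ⟨a, i⟩
    fin_cases a
    · exact hmX i
    · exact hmY i
    · exact hmZ i
  set V : Ω → (Fin 3 × Fin n) → ℝ := fun ω q => R q ω with hVdef
  have hV : Measurable V := measurable_pi_lambda _ hmR
  set ν : Measure ((Fin 3 × Fin n) → ℝ) := μ.map V with hνdef
  set m : Fin 3 × Fin n → Measure ℝ := fun q => μ.map (X q.2) with hmdef
  haveI : ∀ q, IsProbabilityMeasure (m q) :=
    fun q => Measure.isProbabilityMeasure_map (hmX q.2).aemeasurable
  have hmapR : ∀ q, μ.map (R q) = m q := by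
    rintro ⟨a, i⟩
    fin_cases a
    · rfl
    · exact (hidY i).map_eq.symm
    · exact (hidZ i).map_eq.symm
  -- ν is the product measure
  have hpiν : ν = Measure.pi m := by
    refine (Measure.pi_eq fun s hs => ?_).symm
    rw [hνdef, Measure.map_apply hV (MeasurableSet.univ_pi hs)]
    have hpre : V ⁻¹' Set.pi Set.univ s = ⋂ q, R q ⁻¹' s q := by
      ext ω; simp [hVdef, Set.mem_pi]
    have hbi : (⋂ q, R q ⁻¹' s q) = ⋂ q ∈ (Finset.univ : Finset (Fin 3 × Fin n)),
        R q ⁻¹' s q := by simp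
    rw [hpre, hbi, hindep.measure_inter_preimage_eq_mul Finset.univ (fun q _ => hs q)]
    refine Finset.prod_congr rfl fun q _ => ?_
    rw [← Measure.map_apply (hmR q) (hs q), hmapR q]
  haveI : IsProbabilityMeasure ν := Measure.isProbabilityMeasure_map hV.aemeasurable
  -- symmetry of ν under per-index permutations
  have hsymm : ∀ (σ : Fin n → Equiv.Perm (Fin 3)) (p₁ p₂ : Fin 3 × Fin n),
      ν (Fset ((permEquiv σ).symm p₁) ((permEquiv σ).symm p₂)) = ν (Fset p₁ p₂) := by
    intro σ p₁ p₂
    set T := MeasurableEquiv.piCongrLeft (fun _ : Fin 3 × Fin n => ℝ) (permEquiv σ) with hT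
    have hmp : ν.map T = ν := by
      rw [hpiν]
      have h := Measure.pi_map_piCongrLeft (permEquiv σ) (β := fun _ : Fin 3 × Fin n => ℝ) m
      rw [show (fun i => m (permEquiv σ i)) = m from funext fun q => rfl] at h
      exact h
    have hTapp : ∀ (g : (Fin 3 × Fin n) → ℝ) q, T g q = g ((permEquiv σ).symm q) := by
      intro g q
      conv_lhs => rw [← Equiv.apply_symm_apply (permEquiv σ) q]
      exact MeasurableEquiv.piCongrLeft_apply_apply (β := fun _ : Fin 3 × Fin n => ℝ) (permEquiv σ) g ((permEquiv σ).symm q)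
    have hpreim : T ⁻¹' (Fset p₁ p₂) =
        Fset ((permEquiv σ).symm p₁) ((permEquiv σ).symm p₂) := by
      ext g
      simp only [Set.mem_preimage, Fset, Set.mem_setOf_eq, hTapp]
      constructor
      · rintro ⟨h1, h2⟩
        refine ⟨fun q hq => ?_, fun q hq1 hq2 => ?_⟩
        · simpa using h1 (permEquiv σ q) (fun h => hq (by simp [← h]))
        · simpa using h2 (permEquiv σ q) (fun h => hq1 (by simp [← h]))
            (fun h => hq2 (by simp [← h]))
      · rintro ⟨h1, h2⟩
        refine ⟨fun q hq => ?_, fun q hq1 hq2 => ?_⟩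
        · exact h1 ((permEquiv σ).symm q) (fun h => hq (by simpa using congrArg (permEquiv σ) h))
        · exact h2 ((permEquiv σ).symm q) (fun h => hq1 (by simpa using congrArg (permEquiv σ) h))
            (fun h => hq2 (by simpa using congrArg (permEquiv σ) h))
    calc ν (Fset ((permEquiv σ).symm p₁) ((permEquiv σ).symm p₂))
        = ν (T ⁻¹' (Fset p₁ p₂)) := by rw [hpreim]
      _ = (ν.map T) (Fset p₁ p₂) := (Measure.map_apply T.measurable (measurableSet_Fset _ _)).symm
      _ = ν (Fset p₁ p₂) := by rw [hmp]
  -- the key combinatorial claim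
  have claim : ∀ (a b : Fin 3) (i j : Fin n), (a, i) ≠ (b, j) →
      ν (Fset (a, i) (b, j)) = ν (Fset ((0 : Fin 3), i) ((1 : Fin 3), j)) := by
    intro a b i j hne
    by_cases hij : i = j
    · subst hij
      have hab : a ≠ b := fun h => hne (by rw [h])
      obtain ⟨π, hπa, hπb⟩ := exists_perm_fin3 a b hab
      have h := hsymm (fun k => if k = i then π else 1) (0, i) (1, i)
      have e1 : ((permEquiv (fun k => if k = i then π else 1)).symm ((0 : Fin 3), i)) = (a, i) := by
        simp only [permEquiv_symm_apply]
        rw [← hπa]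
        simp
      have e2 : ((permEquiv (fun k => if k = i then π else 1)).symm ((1 : Fin 3), i)) = (b, i) := by
        simp only [permEquiv_symm_apply]
        rw [← hπb]
        simp
      rw [e1, e2] at h
      exact h
    · set σ : Fin n → Equiv.Perm (Fin 3) :=
        fun k => if k = i then Equiv.swap 0 a else if k = j then Equiv.swap 1 b else 1 with hσ
      have h := hsymm σ (0, i) (1, j)
      have e1 : ((permEquiv σ).symm ((0 : Fin 3), i)) = (a, i) := by
        simp [hσ, Equiv.swap_inv]
      have e2 : ((permEquiv σ).symm ((1 : Fin 3), j)) = (b, j) := by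
        simp [hσ, Equiv.swap_inv, Ne.symm hij]
      rw [e1, e2] at h
      exact h
  -- the target event
  set E : Set ((Fin 3 × Fin n) → ℝ) :=
    ⋃ r : Fin n × Fin n, Fset ((0 : Fin 3), r.1) ((1 : Fin 3), r.2) with hE
  have hmE : MeasurableSet E := MeasurableSet.iUnion fun r => measurableSet_Fset _ _
  have hTarget : {ω | ∃ i j : Fin n,
        (∀ q : Fin 3 × Fin n, q ≠ (0, i) → ![X, Y, Z] q.1 q.2 ω < X i ω) ∧
        (∀ q : Fin 3 × Fin n, q ≠ (0, i) → q ≠ (1, j) →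
          ![X, Y, Z] q.1 q.2 ω < Y j ω)} = V ⁻¹' E := by
    ext ω
    simp only [Set.mem_setOf_eq, Set.mem_preimage, hE, Set.mem_iUnion, Fset, Prod.exists,
      hVdef, hRdef]
    constructor
    · rintro ⟨i, j, h1, h2⟩
      exact ⟨i, j, by simpa using h1, by simpa using h2⟩
    · rintro ⟨i, j, h1, h2⟩
      exact ⟨i, j, by simpa using h1, by simpa using h2⟩
  have hμν : μ {ω | ∃ i j : Fin n,
        (∀ q : Fin 3 × Fin n, q ≠ (0, i) → ![X, Y, Z] q.1 q.2 ω < X i ω) ∧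
        (∀ q : Fin 3 × Fin n, q ≠ (0, i) → q ≠ (1, j) →
          ![X, Y, Z] q.1 q.2 ω < Y j ω)} = ν E := by
    rw [hTarget, hνdef, Measure.map_apply hV hmE]
  -- ν E as a sum
  have hdisjE : Pairwise (Function.onFun Disjoint
      fun r : Fin n × Fin n => Fset ((0 : Fin 3), r.1) ((1 : Fin 3), r.2)) := by
    intro r r' hrr
    refine Fset_disjoint (by simp) (by simp) ?_
    intro h
    apply hrr
    have h1 := congrArg (fun p => (p.1.2, p.2.2)) h
    simpa [Prod.ext_iff] using h1
  have hνE : ν E = ∑ r : Fin n × Fin n, ν (Fset ((0 : Fin 3), r.1) ((1 : Fin 3), r.2)) := by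
    rw [hE, measure_iUnion hdisjE fun r => measurableSet_Fset _ _, tsum_fintype]
  -- lower bound 1 ≤ sum over all admissible pairs
  set S : Finset ((Fin 3 × Fin n) × (Fin 3 × Fin n)) :=
    Finset.univ.filter (fun p => p.1 ≠ p.2) with hS
  have hinj1 : (1 : ENNReal) ≤ ν {f : (Fin 3 × Fin n) → ℝ | Function.Injective f} := by
    have hbad : μ {ω | ¬ Function.Injective (V ω)} = 0 := by
      have := hdistinct
      rw [MeasureTheory.ae_iff] at this
      exact this
    have hset : V ⁻¹' {f : (Fin 3 × Fin n) → ℝ | Function.Injective f} =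
        {ω | Function.Injective (V ω)} := rfl
    have : (1 : ENNReal) = μ Set.univ := (measure_univ).symm
    rw [this]
    have hcup : (Set.univ : Set Ω) ⊆
        {ω | Function.Injective (V ω)} ∪ {ω | ¬ Function.Injective (V ω)} := by
      intro ω _
      by_cases h : Function.Injective (V ω)
      · exact Or.inl h
      · exact Or.inr h
    calc μ Set.univ ≤ μ ({ω | Function.Injective (V ω)} ∪ {ω | ¬ Function.Injective (V ω)}) :=
          measure_mono hcup
      _ ≤ μ {ω | Function.Injective (V ω)} + μ {ω | ¬ Function.Injective (V ω)} :=
          measure_union_le _ _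
      _ = μ {ω | Function.Injective (V ω)} := by rw [hbad, add_zero]
      _ = ν {f : (Fin 3 × Fin n) → ℝ | Function.Injective f} := by
          rw [hνdef, Measure.map_apply hV measurableSet_inj, hset]
  have hcover : {f : (Fin 3 × Fin n) → ℝ | Function.Injective f} ⊆
      ⋃ p ∈ S, Fset p.1 p.2 := by
    intro f hf
    obtain ⟨p₁, p₂, hne, hmem⟩ := Fset_cover hn hf
    exact Set.mem_iUnion₂.2 ⟨(p₁, p₂), by simp [hS, hne], hmem⟩
  have hsumS : ν (⋃ p ∈ S, Fset p.1 p.2) = ∑ p ∈ S, ν (Fset p.1 p.2) := by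
    refine measure_biUnion_finset ?_ fun p _ => measurableSet_Fset _ _
    intro p hp p' hp' hpp
    simp only [hS, Finset.coe_filter, Set.mem_setOf_eq, Finset.mem_univ, true_and] at hp hp'
    exact Fset_disjoint hp hp' (by simpa [Prod.ext_iff] using hpp)
  have h1S : (1 : ENNReal) ≤ ∑ p ∈ S, ν (Fset p.1 p.2) :=
    hinj1.trans ((measure_mono hcover).trans_eq hsumS)
  -- termwise bound
  have htermwise : ∑ p ∈ S, ν (Fset p.1 p.2) ≤
      ∑ p : (Fin 3 × Fin n) × (Fin 3 × Fin n),
        ν (Fset ((0 : Fin 3), p.1.2) ((1 : Fin 3), p.2.2)) := by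
    calc ∑ p ∈ S, ν (Fset p.1 p.2)
        ≤ ∑ p ∈ S, ν (Fset ((0 : Fin 3), p.1.2) ((1 : Fin 3), p.2.2)) := by
          refine Finset.sum_le_sum fun p hp => ?_
          simp only [hS, Finset.mem_filter, Finset.mem_univ, true_and] at hp
          have := claim p.1.1 p.2.1 p.1.2 p.2.2 (by simpa using hp)
          simp only [Prod.mk.eta] at this
          exact le_of_eq this
      _ ≤ ∑ p : (Fin 3 × Fin n) × (Fin 3 × Fin n),
            ν (Fset ((0 : Fin 3), p.1.2) ((1 : Fin 3), p.2.2)) :=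
          Finset.sum_le_sum_of_subset (Finset.filter_subset _ _)
  -- counting : the full sum is 9 times the sum over index pairs
  have h3 : ∀ (K : Fin n → ENNReal), ∑ q : Fin 3 × Fin n, K q.2 = 3 * ∑ i, K i := by
    intro K
    calc ∑ q : Fin 3 × Fin n, K q.2 = ∑ _a : Fin 3, ∑ i, K i := Fintype.sum_prod_type _
      _ = 3 * ∑ i, K i := by
        rw [Finset.sum_const, Finset.card_univ, Fintype.card_fin, nsmul_eq_mul]
        norm_num
  have hcount : ∑ p : (Fin 3 × Fin n) × (Fin 3 × Fin n),
      ν (Fset ((0 : Fin 3), p.1.2) ((1 : Fin 3), p.2.2)) =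
      9 * ∑ r : Fin n × Fin n, ν (Fset ((0 : Fin 3), r.1) ((1 : Fin 3), r.2)) := by
    have hstep : ∑ p : (Fin 3 × Fin n) × (Fin 3 × Fin n),
        ν (Fset ((0 : Fin 3), p.1.2) ((1 : Fin 3), p.2.2)) =
        ∑ q1 : Fin 3 × Fin n, ∑ q2 : Fin 3 × Fin n,
          ν (Fset ((0 : Fin 3), q1.2) ((1 : Fin 3), q2.2)) := Fintype.sum_prod_type _
    rw [hstep]
    calc ∑ q1 : Fin 3 × Fin n, ∑ q2 : Fin 3 × Fin n,
          ν (Fset ((0 : Fin 3), q1.2) ((1 : Fin 3), q2.2))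
        = ∑ q1 : Fin 3 × Fin n, 3 * ∑ j, ν (Fset ((0 : Fin 3), q1.2) ((1 : Fin 3), j)) := by
          refine Finset.sum_congr rfl fun q1 _ => ?_
          exact h3 fun j => ν (Fset ((0 : Fin 3), q1.2) ((1 : Fin 3), j))
      _ = 3 * ∑ q1 : Fin 3 × Fin n, ∑ j, ν (Fset ((0 : Fin 3), q1.2) ((1 : Fin 3), j)) := by
          rw [Finset.mul_sum]
      _ = 3 * (3 * ∑ i, ∑ j, ν (Fset ((0 : Fin 3), i) ((1 : Fin 3), j))) := by
          rw [h3 fun i => ∑ j, ν (Fset ((0 : Fin 3), i) ((1 : Fin 3), j))]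
      _ = 9 * ∑ r : Fin n × Fin n, ν (Fset ((0 : Fin 3), r.1) ((1 : Fin 3), r.2)) := by
          rw [show (∑ r : Fin n × Fin n, ν (Fset ((0 : Fin 3), r.1) ((1 : Fin 3), r.2))) =
            ∑ i, ∑ j, ν (Fset ((0 : Fin 3), i) ((1 : Fin 3), j)) from Fintype.sum_prod_type _,
            ← mul_assoc]
          norm_num
  -- conclude
  rw [hμν, hνE]
  refine ENNReal.div_le_of_le_mul ?_
  calc (1 : ENNReal) ≤ ∑ p ∈ S, ν (Fset p.1 p.2) := h1S
    _ ≤ ∑ p : (Fin 3 × Fin n) × (Fin 3 × Fin n),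
          ν (Fset ((0 : Fin 3), p.1.2) ((1 : Fin 3), p.2.2)) := htermwise
    _ = 9 * ∑ r : Fin n × Fin n, ν (Fset ((0 : Fin 3), r.1) ((1 : Fin 3), r.2)) := hcount
    _ = (∑ r : Fin n × Fin n, ν (Fset ((0 : Fin 3), r.1) ((1 : Fin 3), r.2))) * 9 := by
          rw [mul_comm]
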